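/- Let B be a commutative ring, J an ideal of B, t > 0 an integer, and (Fₙ) a direct system of half-exact functors from B/J^t-modules to B/J^t-modules (i.e., for every short exact sequence 0 → U → W → V → 0 of B/J^t-modules, the sequence Fₙ(U) → Fₙ(W) → Fₙ(V) is exact). If colim_n Fₙ(W) = 0 for every B/J-module W (viewed as B/J^t-module), then colim_n Fₙ(W) = 0 for every B/J^t-module W. -/

import Mathlib

open CategoryTheory

/-- Let `B` be a commutative ring, `J` an ideal, `t > 0`, and `(Fₙ)` a
direct system of half-exact functors on `B/Jᵗ`-modules. If the (elementwise) colimit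
`colim_n Fₙ(W)` vanishes for every `B/J`-module `W` (i.e. every `B/Jᵗ`-module killed
by `J`), then it vanishes for every `B/Jᵗ`-module `W`. -/
theorem stmt_9 {B : Type} [CommRing B] (J : Ideal B) (t : ℕ) (ht : 0 < t)
    {ι : Type} [Preorder ι] [IsDirected ι (· ≤ ·)] [Nonempty ι]
    (F : ι → ModuleCat (B ⧸ J ^ t) ⥤ ModuleCat (B ⧸ J ^ t))
    (τ : ∀ {i j : ι}, i ≤ j → (F i ⟶ F j))
    (hτ_refl : ∀ i : ι, τ (le_refl i) = 𝟙 (F i))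
    (hτ_trans : ∀ {i j k : ι} (hij : i ≤ j) (hjk : j ≤ k),
      τ (hij.trans hjk) = τ hij ≫ τ hjk)
    (hhalf : ∀ (i : ι) (U W V : ModuleCat (B ⧸ J ^ t)) (f : U ⟶ W) (g : W ⟶ V),
      Function.Injective f → Function.Surjective g → Function.Exact f g →
      Function.Exact ((F i).map f) ((F i).map g))
    (hvan : ∀ W : ModuleCat (B ⧸ J ^ t),
      (∀ b ∈ J, ∀ w : W, (Ideal.Quotient.mk (J ^ t) b) • w = 0) →
      ∀ (i : ι) (x : (F i).obj W), ∃ (j : ι) (hij : i ≤ j), ((τ hij).app W) x = 0) :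
    ∀ (W : ModuleCat (B ⧸ J ^ t)) (i : ι) (x : (F i).obj W),
      ∃ (j : ι) (hij : i ≤ j), ((τ hij).app W) x = 0 := by
  set R := B ⧸ J ^ t
  -- Key claim, by induction on s: the colimit vanishes on modules killed by `J ^ s`.
  have key : ∀ s : ℕ, ∀ W : ModuleCat R,
      (∀ b ∈ J ^ s, ∀ w : W, (Ideal.Quotient.mk (J ^ t) b) • w = 0) →
      ∀ (i : ι) (x : (F i).obj W), ∃ (j : ι) (hij : i ≤ j), ((τ hij).app W) x = 0 := by
    intro s
    induction s with
    | zero =>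
        intro W hW i x
        exact hvan W (fun b _ w => hW b (by simp) w) i x
    | succ s ih =>
        intro W hW i x
        -- the submodule J•W
        set I : Ideal R := J.map (Ideal.Quotient.mk (J ^ t)) with hI
        set N : Submodule R W := I • (⊤ : Submodule R W) with hN
        set U : ModuleCat R := ModuleCat.of R N
        set V : ModuleCat R := ModuleCat.of R (W ⧸ N)
        set f : U ⟶ W := ModuleCat.ofHom N.subtype
        set g : W ⟶ V := ModuleCat.ofHom N.mkQ
        have hinj : Function.Injective f := Subtype.val_injective
        have hsurj : Function.Surjective g := Submodule.mkQ_surjective N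
        have hexact : Function.Exact f g := LinearMap.exact_subtype_mkQ N
        -- V is killed by J
        have hVkill : ∀ b ∈ J, ∀ v : V, (Ideal.Quotient.mk (J ^ t) b) • v = 0 := by
          intro b hb v
          obtain ⟨w, rfl⟩ := hsurj v
          show (Ideal.Quotient.mk (J ^ t) b) • N.mkQ w = 0
          rw [← map_smul, Submodule.mkQ_apply, Submodule.Quotient.mk_eq_zero]
          exact Submodule.smul_mem_smul (Ideal.mem_map_of_mem _ hb) trivial
        -- U is killed by J ^ s
        have hUkill : ∀ b ∈ J ^ s, ∀ u : U, (Ideal.Quotient.mk (J ^ t) b) • u = 0 := by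
          intro b hb u
          have : ∀ w ∈ N, (Ideal.Quotient.mk (J ^ t) b) • w = 0 := by
            intro w hw
            refine Submodule.smul_induction_on hw ?_ ?_
            · rintro r hr m -
              obtain ⟨a, ha, rfl⟩ := Ideal.mem_map_iff_of_surjective _
                Ideal.Quotient.mk_surjective |>.mp hr
              rw [smul_smul, ← map_mul]
              exact hW (b * a) (by
                rw [pow_succ]
                exact Ideal.mul_mem_mul hb ha) m
            · intro m₁ m₂ h1 h2
              rw [smul_add, h1, h2, add_zero]
          apply Subtype.ext
          exact this u.1 u.2
        -- Step 1: kill the image in F i V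
        obtain ⟨j, hij, hj⟩ := hvan V hVkill i (((F i).map g) x)
        -- Step 2: lift along F j f
        have hnat : ((F i).map g ≫ (τ hij).app V) x = ((τ hij).app W ≫ (F j).map g) x := by
          rw [(τ hij).naturality g]
        have h0 : ((F j).map g) (((τ hij).app W) x) = 0 := by
          have := hnat
          simp only [ConcreteCategory.comp_apply, Function.comp_apply] at this
          rw [← this, hj]
        obtain ⟨y, hy⟩ := (hhalf j U W V f g hinj hsurj hexact _).mp h0
        -- Step 3: kill y using the inductive hypothesis
        obtain ⟨k, hjk, hk⟩ := ih U hUkill j y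
        refine ⟨k, hij.trans hjk, ?_⟩
        rw [hτ_trans hij hjk]
        have hnat2 : ((F j).map f ≫ (τ hjk).app W) y = ((τ hjk).app U ≫ (F k).map f) y := by
          rw [(τ hjk).naturality f]
        simp only [ConcreteCategory.comp_apply, Function.comp_apply] at hnat2
        simp only [NatTrans.comp_app, ConcreteCategory.comp_apply, Function.comp_apply]
        rw [← hy, hnat2, hk, map_zero]
  intro W i x
  refine key t W ?_ i x
  intro b hb w
  have : (Ideal.Quotient.mk (J ^ t)) b = 0 := Ideal.Quotient.eq_zero_iff_mem.mpr hb
  rw [this, zero_smul]
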